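/- A Ricci-flat graph (a graph in which the Lin–Lu–Yau Ricci curvature vanishes on every edge) contains no vertex of degree 1. -/
import Mathlib


open scoped BigOperators

namespace RicciFlatPaper

variable {V : Type*}

/-- Degree of a vertex (as the number of neighbors). -/
noncomputable def deg (G : SimpleGraph V) (v : V) : ℕ := (G.neighborSet v).ncard

/-- A graph is locally finite if every vertex has finitely many neighbors. -/
def LocFin (G : SimpleGraph V) : Prop := ∀ v : V, (G.neighborSet v).Finite

/-- A finitely supported probability distribution on the vertex set. -/
def IsProbDist (μ : V → ℝ) : Prop :=
  (∀ v, 0 ≤ μ v) ∧ (Function.support μ).Finite ∧ ∑ᶠ v, μ v = 1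

/-- A (finitely supported) coupling between two distributions. -/
def IsCoupling (μ₁ μ₂ : V → ℝ) (A : V → V → ℝ) : Prop :=
  (∀ x y, 0 ≤ A x y) ∧ (Function.support fun p : V × V => A p.1 p.2).Finite ∧
  (∀ x, ∑ᶠ y, A x y = μ₁ x) ∧ (∀ y, ∑ᶠ x, A x y = μ₂ y)

/-- Transportation cost of a coupling with respect to the graph distance. -/
noncomputable def cost (G : SimpleGraph V) (A : V → V → ℝ) : ℝ :=
  ∑ᶠ p : V × V, A p.1 p.2 * (G.dist p.1 p.2 : ℝ)

/-- The transportation (Wasserstein) distance between two distributions. -/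
noncomputable def W (G : SimpleGraph V) (μ₁ μ₂ : V → ℝ) : ℝ :=
  sInf {c : ℝ | ∃ A : V → V → ℝ, IsCoupling μ₁ μ₂ A ∧ c = cost G A}

open Classical in
/-- The lazy neighborhood measure `μ_x^α`. -/
noncomputable def mu (G : SimpleGraph V) (α : ℝ) (x : V) : V → ℝ :=
  fun z => if z = x then α else if G.Adj x z then (1 - α) / (deg G x : ℝ) else 0

/-- The `α`-Ollivier–Ricci curvature `k_α(x,y) = 1 - W(μ_x^α, μ_y^α)`. -/
noncomputable def kIdle (G : SimpleGraph V) (α : ℝ) (x y : V) : ℝ :=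
  1 - W G (mu G α x) (mu G α y)

/-- `HasRicci G x y k` means the Lin–Lu–Yau curvature `k(x,y) = lim_{α→1} k_α(x,y)/(1-α)`
exists and equals `k`. -/
def HasRicci (G : SimpleGraph V) (x y : V) (k : ℝ) : Prop :=
  Filter.Tendsto (fun α : ℝ => kIdle G α x y / (1 - α))
    (nhdsWithin (1 : ℝ) (Set.Iio (1 : ℝ))) (nhds k)

/-- A graph is Ricci-flat if the Lin–Lu–Yau curvature vanishes on every edge. -/
def RicciFlat (G : SimpleGraph V) : Prop := ∀ x y : V, G.Adj x y → HasRicci G x y 0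

/-- `f` is 1-Lipschitz with respect to the graph distance. -/
def Lip1 (G : SimpleGraph V) (f : V → ℝ) : Prop :=
  ∀ u v : V, f u - f v ≤ (G.dist u v : ℝ)

/-- The edge `(x,y)` is contained in some cycle of length `n`. -/
def EdgeInCycle (G : SimpleGraph V) (n : ℕ) (x y : V) : Prop :=
  ∃ (u : V) (w : G.Walk u u), w.IsCycle ∧ w.length = n ∧ s(x, y) ∈ w.edges

end RicciFlatPaper

namespace RicciFlatPaper

variable {V : Type*}

/-- a Ricci-flat graph has no vertex of degree 1. -/
theorem ricciFlat_no_leaf (G : SimpleGraph V) (hG : G.Connected) (hlf : LocFin G)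
    (hflat : RicciFlat G) : ∀ v : V, deg G v ≠ 1 := by
  classical
  intro v hdeg
  obtain ⟨y, hy⟩ := Set.ncard_eq_one.mp hdeg
  have hadj : G.Adj v y := by
    have : y ∈ G.neighborSet v := by rw [hy]; exact Set.mem_singleton y
    exact this
  have hvy : v ≠ y := hadj.ne
  have hyv : y ≠ v := hvy.symm
  have hfin : (G.neighborSet y).Finite := hlf y
  set N : Finset V := hfin.toFinset with hNdef
  have hmemN : ∀ w, w ∈ N ↔ G.Adj y w := by
    intro w; rw [hNdef, Set.Finite.mem_toFinset]; rfl
  have hvN : v ∈ N := (hmemN v).mpr hadj.symm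
  have hyN : y ∉ N := fun h => G.irrefl ((hmemN y).mp h)
  set d : ℕ := deg G y with hddef
  have hcard : N.card = d := (Set.ncard_eq_toFinset_card _ hfin).symm
  have hd1 : 1 ≤ d := by rw [← hcard]; exact Finset.card_pos.mpr ⟨v, hvN⟩
  have hdR : (1:ℝ) ≤ (d:ℝ) := by exact_mod_cast hd1
  have hd0 : (0:ℝ) < (d:ℝ) := lt_of_lt_of_le one_pos hdR
  have key : ∀ α : ℝ, α ∈ Set.Ioo (1/2 : ℝ) 1 →
      2/(d:ℝ) ≤ kIdle G α v y / (1 - α) := by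
    intro α hα
    obtain ⟨hα1, hα2⟩ := hα
    have h1α : 0 < 1 - α := by linarith
    have hc0 : 0 ≤ (1 - α)/(d:ℝ) := by positivity
    have hcle : (1-α)/(d:ℝ) ≤ 1 - α := div_le_self (le_of_lt h1α) hdR
    have hcα : (1-α)/(d:ℝ) ≤ α := by linarith
    -- the explicit coupling
    set A : V → V → ℝ := fun u w =>
      if u = v ∧ w = v then (1-α)/(d:ℝ)
      else if u = v ∧ w = y then α - (1-α)/(d:ℝ)
      else if u = y ∧ w = y then (1-α)/(d:ℝ)
      else if u = y ∧ w ∈ N ∧ w ≠ v then (1-α)/(d:ℝ)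
      else 0 with hAdef
    have hAvv : A v v = (1-α)/(d:ℝ) := by simp [hAdef]
    have hAvy : A v y = α - (1-α)/(d:ℝ)  := by simp [hAdef, hyv]
    have hAyy : A y y = (1-α)/(d:ℝ) := by simp [hAdef, hyv]
    have hAyv : A y v = 0 := by simp [hAdef, hyv, hvy]
    have hAyN : ∀ w ∈ N, A y w = if w = v then 0 else (1-α)/(d:ℝ) := by
      intro w hw
      have hwy : w ≠ y := fun h => hyN (h ▸ hw)
      by_cases hwv : w = v
      · simp [hAdef, hyv, hwv, hvy]
      · simp [hAdef, hyv, hwy, hw, hwv]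
    have hAz : ∀ u w, u ≠ v → u ≠ y → A u w = 0 := by
      intro u w h1 h2; simp [hAdef, h1, h2]
    have hAvz : ∀ w, w ≠ v → w ≠ y → A v w = 0 := by
      intro w h1 h2; simp [hAdef, h1, h2, hvy]
    have hAyz : ∀ w, w ∉ N → w ≠ y → A y w = 0 := by
      intro w h1 h2; simp [hAdef, hyv, h1, h2]
    have hAnn : ∀ u w, 0 ≤ A u w := by
      intro u w
      rw [hAdef]
      dsimp only
      split_ifs <;> linarith
    -- the inner sum over neighbors of y
    have hsumN : ∑ w ∈ N, (if w = v then 0 else (1-α)/(d:ℝ))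
        = ((d:ℝ) - 1) * ((1-α)/(d:ℝ)) := by
      have h1 : ∀ w ∈ N, (if w = v then 0 else (1-α)/(d:ℝ))
          = (1-α)/(d:ℝ) - (if w = v then (1-α)/(d:ℝ) else 0) := by
        intro w _; split_ifs <;> ring
      rw [Finset.sum_congr rfl h1, Finset.sum_sub_distrib, Finset.sum_const,
        Finset.sum_ite_eq' N v (fun _ => (1-α)/(d:ℝ)), if_pos hvN, hcard]
      push_cast
      ring
    -- row sums
    have hrow : ∀ u, ∑ᶠ w, A u w = mu G α v u := by
      intro u
      by_cases huv : u = v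
      · subst huv
        have hsupp : (Function.support fun w => A u w) ⊆ ↑({u, y} : Finset V) := by
          intro w hw
          simp only [Function.mem_support] at hw
          by_contra hcon
          simp only [Finset.coe_insert, Finset.coe_singleton, Set.mem_insert_iff,
            Set.mem_singleton_iff, not_or] at hcon
          exact hw (hAvz w hcon.1 hcon.2)
        rw [finsum_eq_finset_sum_of_support_subset _ hsupp, Finset.sum_pair hvy,
          hAvv, hAvy]
        simp [mu]
      · by_cases huy : u = y
        · subst huy
          have hsupp : (Function.support fun w => A u w) ⊆ ↑(insert u N) := by
            intro w hw
            simp only [Function.mem_support] at hw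
            by_contra hcon
            simp only [Finset.coe_insert, Set.mem_insert_iff, Finset.mem_coe,
              not_or] at hcon
            exact hw (hAyz w hcon.2 hcon.1)
          rw [finsum_eq_finset_sum_of_support_subset _ hsupp, Finset.sum_insert hyN,
            hAyy, Finset.sum_congr rfl hAyN, hsumN]
          have hmuval : mu G α v u = 1 - α := by
            have hdegv : (deg G v : ℝ) = 1 := by rw [hdeg]; norm_num
            simp [mu, hyv, hadj, hdegv]
          rw [hmuval]
          field_simp
          ring
        · have hz : ∀ w, A u w = 0 := fun w => hAz u w huv huy
          rw [finsum_eq_zero_of_forall_eq_zero hz]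
          have hnadj : ¬ G.Adj v u := by
            intro h
            have : u ∈ G.neighborSet v := h
            rw [hy] at this
            exact huy this
          simp [mu, huv, hnadj]
    -- column sums
    have hcol : ∀ w, ∑ᶠ u, A u w = mu G α y w := by
      intro w
      have hsupp : (Function.support fun u => A u w) ⊆ ↑({v, y} : Finset V) := by
        intro u hu
        simp only [Function.mem_support] at hu
        by_contra hcon
        simp only [Finset.coe_insert, Finset.coe_singleton, Set.mem_insert_iff,
          Set.mem_singleton_iff, not_or] at hcon
        exact hu (hAz u w hcon.1 hcon.2)
      rw [finsum_eq_finset_sum_of_support_subset _ hsupp, Finset.sum_pair hvy]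
      by_cases hwv : w = v
      · subst hwv
        rw [hAvv, hAyv]
        have hA2 : G.Adj y w := hadj.symm
        simp [mu, hvy, hA2, ← hddef]
      · by_cases hwy : w = y
        · subst hwy
          rw [hAvy, hAyy]
          simp [mu]
        · by_cases hwN : w ∈ N
          · rw [hAvz w hwv hwy, hAyN w hwN, if_neg hwv]
            have hA2 : G.Adj y w := (hmemN w).mp hwN
            simp [mu, hwy, hA2, ← hddef]
          · rw [hAvz w hwv hwy, hAyz w hwN hwy]
            have hnadj : ¬ G.Adj y w := fun h => hwN ((hmemN w).mpr h)
            simp [mu, hwy, hnadj]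
    -- finite support of the coupling
    have hPsupp : (Function.support fun p : V × V => A p.1 p.2)
        ⊆ ↑((({v, y} : Finset V) ×ˢ insert y N)) := by
      intro p hp
      simp only [Function.mem_support] at hp
      simp only [Finset.coe_product, Set.mem_prod, Finset.mem_coe,
        Finset.mem_insert, Finset.mem_singleton]
      constructor
      · by_contra hcon
        push_neg at hcon
        exact hp (hAz p.1 p.2 hcon.1 hcon.2)
      · by_contra hcon
        push_neg at hcon
        obtain ⟨h1, h2⟩ := hcon
        by_cases h3 : p.1 = v
        · by_cases h4 : p.2 = v
          · exact h2 (h4 ▸ hvN)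
          · exact hp (h3 ▸ hAvz p.2 h4 h1)
        · by_cases h5 : p.1 = y
          · exact hp (h5 ▸ hAyz p.2 h2 h1)
          · exact hp (hAz p.1 p.2 h3 h5)
    have hcoupling : IsCoupling (mu G α v) (mu G α y) A :=
      ⟨hAnn, Set.Finite.subset (Finset.finite_toSet _) hPsupp, hrow, hcol⟩
    -- cost bound
    have hdist_vy : (G.dist v y : ℝ) = 1 := by
      rw [SimpleGraph.dist_eq_one_iff_adj.mpr hadj]; norm_num
    have hPsupp' : (Function.support fun p : V × V => A p.1 p.2 * (G.dist p.1 p.2 : ℝ))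
        ⊆ ↑((({v, y} : Finset V) ×ˢ insert y N)) := by
      intro p hp
      apply hPsupp
      simp only [Function.mem_support] at hp ⊢
      intro h0
      rw [h0, zero_mul] at hp
      exact hp rfl
    have hcost : cost G A ≤ 1 - 2 * ((1-α)/(d:ℝ)) := by
      rw [cost, finsum_eq_finset_sum_of_support_subset _ hPsupp',
        Finset.sum_product, Finset.sum_pair hvy]
      have hrow1 : ∑ w ∈ insert y N, A v w * (G.dist v w : ℝ)
          = α - (1-α)/(d:ℝ) := by
        rw [Finset.sum_insert hyN, hAvy, hdist_vy]
        have hz : ∑ w ∈ N, A v w * (G.dist v w : ℝ) = 0 := by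
          apply Finset.sum_eq_zero
          intro w hw
          have hwy : w ≠ y := fun h => hyN (h ▸ hw)
          by_cases hwv : w = v
          · subst hwv; simp
          · rw [hAvz w hwv hwy]; ring
        rw [hz]; ring
      have hrow2 : ∑ w ∈ insert y N, A y w * (G.dist y w : ℝ)
          = ((d:ℝ) - 1) * ((1-α)/(d:ℝ)) := by
        rw [Finset.sum_insert hyN, hAyy]
        have h1 : ∀ w ∈ N, A y w * (G.dist y w : ℝ)
            = (if w = v then 0 else (1-α)/(d:ℝ)) := by
          intro w hw
          have : (G.dist y w : ℝ) = 1 := by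
            rw [SimpleGraph.dist_eq_one_iff_adj.mpr ((hmemN w).mp hw)]; norm_num
          rw [hAyN w hw, this, mul_one]
        rw [Finset.sum_congr rfl h1, hsumN]
        simp
      rw [hrow1, hrow2]
      have : α - (1-α)/(d:ℝ) + ((d:ℝ) - 1) * ((1-α)/(d:ℝ))
          = 1 - 2 * ((1-α)/(d:ℝ)) := by
        field_simp
        ring
      linarith [this.le]
    -- W is at most the cost of this coupling
    have hbdd : BddBelow {c : ℝ | ∃ B : V → V → ℝ,
        IsCoupling (mu G α v) (mu G α y) B ∧ c = cost G B} := by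
      refine ⟨0, ?_⟩
      rintro c ⟨B, hB, rfl⟩
      apply finsum_nonneg
      intro p
      exact mul_nonneg (hB.1 p.1 p.2) (Nat.cast_nonneg _)
    have hWle : W G (mu G α v) (mu G α y) ≤ cost G A :=
      csInf_le hbdd ⟨A, hcoupling, rfl⟩
    have hk : 2 * ((1-α)/(d:ℝ)) ≤ kIdle G α v y := by
      rw [kIdle]
      linarith
    rw [le_div_iff₀ h1α]
    calc 2/(d:ℝ) * (1 - α) = 2 * ((1-α)/(d:ℝ)) := by ring
    _ ≤ kIdle G α v y := hk
  have hR := hflat v y hadj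
  have hev : ∀ᶠ α in nhdsWithin (1:ℝ) (Set.Iio 1),
      2/(d:ℝ) ≤ kIdle G α v y / (1 - α) := by
    filter_upwards [Ioo_mem_nhdsLT_of_mem
      (show (1:ℝ) ∈ Set.Ioc (1/2 : ℝ) 1 by constructor <;> norm_num)]
      with α hα using key α hα
  have hle0 : 2/(d:ℝ) ≤ 0 := ge_of_tendsto hR hev
  have : (0:ℝ) < 2/(d:ℝ) := by positivity
  linarith

end RicciFlatPaper
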